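/- If A ∈ ℝ^{m×n}, b ∈ ℝ^m, J is a signature matrix, and M = AᵀJA is positive definite, then the indefinite least squares problem min_x (b − Ax)ᵀJ(b − Ax) has the unique minimizer x = M⁻¹AᵀJb. -/

import Mathlib

open Matrix

/-- If `M = AᵀJA` is positive definite, the indefinite least squares problem
`min_x (b − Ax)ᵀJ(b − Ax)` has the unique minimizer `x = M⁻¹AᵀJb`. -/
theorem ils_unique_minimizer {p q n : ℕ}
    (A : Matrix (Fin p ⊕ Fin q) (Fin n) ℝ) (b : Fin p ⊕ Fin q → ℝ)
    (J : Matrix (Fin p ⊕ Fin q) (Fin p ⊕ Fin q) ℝ)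
    (hJ : J = Matrix.fromBlocks 1 0 0 (-1))
    (M : Matrix (Fin n) (Fin n) ℝ) (hM : M = Aᵀ * J * A)
    (hPD : M.PosDef)
    (f : (Fin n → ℝ) → ℝ)
    (hf : ∀ z, f z = (b - A.mulVec z) ⬝ᵥ J.mulVec (b - A.mulVec z))
    (x : Fin n → ℝ) (hx : x = (M⁻¹ * Aᵀ * J).mulVec b) :
    ∀ y, y ≠ x → f x < f y := by
  have hJT : Jᵀ = J := by
    simp [hJ, Matrix.fromBlocks_transpose]
  have hInv : Invertible M := hPD.isUnit.invertible
  have hMM : M * M⁻¹ = 1 :=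
    Matrix.mul_nonsing_inv _ (isUnit_iff_ne_zero.mpr (ne_of_gt hPD.det_pos))
  have hMx : M.mulVec x = (Aᵀ * J).mulVec b := by
    rw [hx, Matrix.mulVec_mulVec]
    rw [← Matrix.mul_assoc, ← Matrix.mul_assoc M M⁻¹ Aᵀ, hMM, Matrix.one_mul]
  -- residual orthogonality: AᵀJ(b - Ax) = 0
  have hres : (Aᵀ * J).mulVec (b - A.mulVec x) = 0 := by
    rw [Matrix.mulVec_sub, Matrix.mulVec_mulVec, ← hM, hMx, sub_self]
  -- key bilinear identity
  have key1 : ∀ u v : Fin n → ℝ,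
      (A.mulVec u) ⬝ᵥ J.mulVec (A.mulVec v) = u ⬝ᵥ M.mulVec v := by
    intro u v
    rw [Matrix.dotProduct_mulVec, Matrix.dotProduct_mulVec, hM]
    rw [← Matrix.vecMul_transpose A u, Matrix.vecMul_vecMul, Matrix.vecMul_vecMul,
      ← Matrix.mul_assoc, ← Matrix.dotProduct_mulVec]
  have key2 : ∀ u : Fin n → ℝ,
      (A.mulVec u) ⬝ᵥ J.mulVec (b - A.mulVec x) = 0 := by
    intro u
    rw [Matrix.dotProduct_mulVec, ← Matrix.vecMul_transpose A u, Matrix.vecMul_vecMul,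
      ← Matrix.dotProduct_mulVec]
    rw [hres]
    simp
  intro y hy
  have hexp : f y = f x + (y - x) ⬝ᵥ M.mulVec (y - x) := by
    rw [hf, hf]
    have hdecomp : b - A.mulVec y = (b - A.mulVec x) - A.mulVec (y - x) := by
      rw [Matrix.mulVec_sub]
      abel
    rw [hdecomp]
    set r := b - A.mulVec x with hr
    set d := y - x with hd
    have hsym : r ⬝ᵥ J.mulVec (A.mulVec d) = (A.mulVec d) ⬝ᵥ J.mulVec r := by
      rw [Matrix.dotProduct_mulVec, ← Matrix.mulVec_transpose J, hJT,
        dotProduct_comm]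
    rw [sub_dotProduct, Matrix.mulVec_sub, dotProduct_sub,
      dotProduct_sub, hsym, key2, key1]
    try ring
  rw [hexp]
  have hpos : 0 < (y - x) ⬝ᵥ M.mulVec (y - x) := by
    have := hPD.dotProduct_mulVec_pos (sub_ne_zero_of_ne hy)
    simpa using this
  linarith
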